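/- Fix n ≥ 1 and let X = {(a,b,c) ∈ ℕ³ : a + b + c = n − 1}, a set of n(n+1)/2 points. Let G be the group of all permutations of X, and for i = 1, 2, 3 let Hᵢ = {π ∈ G : the i-th coordinate of π(t) equals the i-th coordinate of t for all t ∈ X}. Then H₁, H₂, H₃ are subgroups satisfying the triple product property, and |Hᵢ| = 1!·2!···n! for each i. Consequently, the symmetric group on n(n+1)/2 points realizes ⟨N, N, N⟩ with N = ∏_{k=1}^{n} k!. -/

import Mathlib

/-- The right quotient set `Q(S) = {s₁s₂⁻¹ : s₁, s₂ ∈ S}` of a subset of a group. -/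
def rightQuotient {G : Type*} [Group G] (S : Set G) : Set G :=
  {g | ∃ s₁ ∈ S, ∃ s₂ ∈ S, g = s₁ * s₂⁻¹}

/-- Subsets `S₁, S₂, S₃` of a group satisfy the triple product property if whenever
`qᵢ ∈ Q(Sᵢ)` and `q₁q₂q₃ = 1`, we have `q₁ = q₂ = q₃ = 1`. -/
def TPP {G : Type*} [Group G] (S₁ S₂ S₃ : Set G) : Prop :=
  ∀ q₁ ∈ rightQuotient S₁, ∀ q₂ ∈ rightQuotient S₂, ∀ q₃ ∈ rightQuotient S₃,
    q₁ * q₂ * q₃ = 1 → q₁ = 1 ∧ q₂ = 1 ∧ q₃ = 1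

/-- A group `G` realizes `⟨n₁, n₂, n₃⟩` if there are finite subsets `Sᵢ ⊆ G` with
`|Sᵢ| = nᵢ` satisfying the triple product property. -/
def Realizes (G : Type*) [Group G] (n₁ n₂ n₃ : ℕ) : Prop :=
  ∃ S₁ S₂ S₃ : Set G, S₁.Finite ∧ S₂.Finite ∧ S₃.Finite ∧
    S₁.ncard = n₁ ∧ S₂.ncard = n₂ ∧ S₃.ncard = n₃ ∧ TPP S₁ S₂ S₃

/-- The triangular array of points `{(a,b,c) ∈ ℕ³ : a + b + c = n − 1}`. -/
def Tri (n : ℕ) : Type := {t : ℕ × ℕ × ℕ // t.1 + t.2.1 + t.2.2 = n - 1}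

/-- The subgroup (as a set) of permutations of the triangular array preserving
the first coordinate. -/
def triH₁ (n : ℕ) : Set (Equiv.Perm (Tri n)) := {π | ∀ t : Tri n, (π t).val.1 = t.val.1}

/-- Permutations preserving the second coordinate. -/
def triH₂ (n : ℕ) : Set (Equiv.Perm (Tri n)) := {π | ∀ t : Tri n, (π t).val.2.1 = t.val.2.1}

/-- Permutations preserving the third coordinate. -/
def triH₃ (n : ℕ) : Set (Equiv.Perm (Tri n)) := {π | ∀ t : Tri n, (π t).val.2.2 = t.val.2.2}

lemma rightQuotient_subgroup {G : Type*} [Group G] (K : Subgroup G) :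
    rightQuotient (K : Set G) = (K : Set G) := by
  ext g
  constructor
  · rintro ⟨s₁, h₁, s₂, h₂, rfl⟩
    exact mul_mem h₁ (inv_mem h₂)
  · intro hg
    exact ⟨g, hg, 1, K.one_mem, by simp⟩

lemma tpp_image {G G' : Type*} [Group G] [Group G'] (φ : G →* G')
    (hφ : Function.Injective φ) {S₁ S₂ S₃ : Set G} (h : TPP S₁ S₂ S₃) :
    TPP (φ '' S₁) (φ '' S₂) (φ '' S₃) := by
  have himg : ∀ S : Set G, rightQuotient (φ '' S) = φ '' rightQuotient S := by
    intro S
    ext g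
    constructor
    · rintro ⟨_, ⟨a, ha, rfl⟩, _, ⟨b, hb, rfl⟩, rfl⟩
      exact ⟨a * b⁻¹, ⟨a, ha, b, hb, rfl⟩, by simp⟩
    · rintro ⟨_, ⟨a, ha, b, hb, rfl⟩, rfl⟩
      exact ⟨φ a, ⟨a, ha, rfl⟩, φ b, ⟨b, hb, rfl⟩, by simp⟩
  intro q₁ h₁ q₂ h₂ q₃ h₃ hmul
  rw [himg] at h₁ h₂ h₃
  obtain ⟨r₁, hr₁, rfl⟩ := h₁
  obtain ⟨r₂, hr₂, rfl⟩ := h₂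
  obtain ⟨r₃, hr₃, rfl⟩ := h₃
  have hφ1 : φ (r₁ * r₂ * r₃) = φ 1 := by simpa using hmul
  obtain ⟨e₁, e₂, e₃⟩ := h r₁ hr₁ r₂ hr₂ r₃ hr₃ (hφ hφ1)
  exact ⟨by rw [e₁, map_one], by rw [e₂, map_one], by rw [e₃, map_one]⟩

def presSubgroup {α β : Type*} (f : α → β) : Subgroup (Equiv.Perm α) where
  carrier := {π | ∀ t, f (π t) = f t}
  one_mem' := fun _ => rfl
  mul_mem' := by
    intro a b ha hb t
    have h : (a * b) t = a (b t) := rfl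
    rw [h, ha, hb]
  inv_mem' := by
    intro a ha t
    have h := ha (a⁻¹ t)
    rw [show a (a⁻¹ t) = t from a.apply_symm_apply t] at h
    exact h.symm

lemma keyCast {α β : Type*} {f : α → β} (g : ∀ b, Equiv.Perm {t : α // f t = b})
    {b b' : β} (h : b = b') {t : α} (ht : f t = b) (ht' : f t = b') :
    ((g b) ⟨t, ht⟩ : {t : α // f t = b}).1 = ((g b') ⟨t, ht'⟩ : {t : α // f t = b'}).1 := by
  subst h; rfl

def presToPi {α β : Type*} (f : α → β) (π : {π : Equiv.Perm α // ∀ t, f (π t) = f t})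
    (b : β) : Equiv.Perm {t : α // f t = b} where
  toFun x := ⟨π.1 x.1, by rw [π.2 x.1, x.2]⟩
  invFun x := ⟨π.1.symm x.1, by
    have h := π.2 (π.1.symm x.1)
    rw [Equiv.apply_symm_apply] at h
    rw [← h]; exact x.2⟩
  left_inv x := Subtype.ext (π.1.symm_apply_apply x.1)
  right_inv x := Subtype.ext (π.1.apply_symm_apply x.1)

lemma natCard_pres {α β : Type*} (f : α → β) :
    Nat.card {π : Equiv.Perm α // ∀ t, f (π t) = f t}
      = Nat.card (∀ b : β, Equiv.Perm {t : α // f t = b}) := by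
  refine Nat.card_eq_of_bijective (presToPi f) ⟨?_, ?_⟩
  · intro π π' h
    apply Subtype.ext
    apply Equiv.ext
    intro t
    exact congrArg (fun (e : Equiv.Perm {u : α // f u = f t}) => (e ⟨t, rfl⟩).1)
      (congrFun h (f t))
  · intro g
    have hfib : ∀ t : α, f (((g (f t)) ⟨t, rfl⟩).1) = f t := fun t => ((g (f t)) ⟨t, rfl⟩).2
    set π₀ : α → α := fun t => ((g (f t)) ⟨t, rfl⟩).1 with hπ₀
    have hinj : Function.Injective π₀ := by
      intro t t' h
      have hf : f t = f t' := by rw [← hfib t, ← hfib t']; exact congrArg f h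
      have h1 : ((g (f t)) ⟨t', hf.symm⟩).1 = π₀ t' := keyCast g hf hf.symm rfl
      have h2 : ((g (f t)) ⟨t, rfl⟩ : {u : α // f u = f t})
          = (g (f t)) ⟨t', hf.symm⟩ := Subtype.ext (h.trans h1.symm)
      have h3 := (g (f t)).injective h2
      exact congrArg Subtype.val h3
    have hsurj : Function.Surjective π₀ := by
      intro u
      refine ⟨((g (f u)).symm ⟨u, rfl⟩).1, ?_⟩
      have hxf : f (((g (f u)).symm ⟨u, rfl⟩).1) = f u := ((g (f u)).symm ⟨u, rfl⟩).2
      have h1 : π₀ (((g (f u)).symm ⟨u, rfl⟩).1)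
          = ((g (f u)) ⟨((g (f u)).symm ⟨u, rfl⟩).1, hxf⟩).1 := keyCast g hxf rfl hxf
      rw [h1]
      have h2 : (⟨((g (f u)).symm ⟨u, rfl⟩).1, hxf⟩ : {t : α // f t = f u})
          = (g (f u)).symm ⟨u, rfl⟩ := Subtype.ext rfl
      rw [h2, Equiv.apply_symm_apply]
    refine ⟨⟨Equiv.ofBijective π₀ ⟨hinj, hsurj⟩, hfib⟩, ?_⟩
    funext b
    apply Equiv.ext
    intro x
    apply Subtype.ext
    exact keyCast g x.2 rfl x.2

lemma natCard_pres_fin {α : Type*} {n : ℕ} (f : α → Fin n)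
    (e : ∀ v : Fin n, {t : α // f t = v} ≃ Fin (n - (v : ℕ))) :
    Nat.card {π : Equiv.Perm α | ∀ t, f (π t) = f t}
      = ∏ k ∈ Finset.Icc 1 n, Nat.factorial k := by
  have h0 : Nat.card {π : Equiv.Perm α | ∀ t, f (π t) = f t}
      = Nat.card (∀ b : Fin n, Equiv.Perm {t : α // f t = b}) := natCard_pres f
  rw [h0, Nat.card_pi]
  have h1 : ∀ v : Fin n, Nat.card (Equiv.Perm {t : α // f t = v})
      = Nat.factorial (n - (v : ℕ)) := by
    intro v
    rw [Nat.card_congr (Equiv.permCongr (e v)), Nat.card_eq_fintype_card,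
      Fintype.card_perm, Fintype.card_fin]
  rw [Finset.prod_congr rfl (fun v _ => h1 v)]
  rw [Fin.prod_univ_eq_prod_range (fun v => Nat.factorial (n - v)) n]
  have h2 : ∏ i ∈ Finset.range n, Nat.factorial (n - i)
      = ∏ i ∈ Finset.range n, Nat.factorial (i + 1) := by
    rw [← Finset.prod_range_reflect (fun j => Nat.factorial (j + 1)) n]
    apply Finset.prod_congr rfl
    intro i hi
    rw [Finset.mem_range] at hi
    congr 1
    omega
  rw [h2, ← Finset.Ico_add_one_right_eq_Icc, Finset.prod_Ico_eq_prod_range]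
  apply Finset.prod_congr (by norm_num)
  intro i _
  congr 1
  omega


lemma tri_ext {n : ℕ} {x y : Tri n} (h2 : x.val.2.1 = y.val.2.1)
    (h3 : x.val.2.2 = y.val.2.2) : x = y := by
  have hx := x.2
  have hy := y.2
  have h1 : x.val.1 = y.val.1 := by omega
  exact Subtype.ext (Prod.ext h1 (Prod.ext h2 h3))

lemma tri_tpp (n : ℕ) (hn : 1 ≤ n) : TPP (triH₁ n) (triH₂ n) (triH₃ n) := by
  have hc₁ : ((presSubgroup (fun t : Tri n => t.val.1) : Subgroup _) : Set (Equiv.Perm (Tri n)))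
      = triH₁ n := rfl
  have hc₂ : ((presSubgroup (fun t : Tri n => t.val.2.1) : Subgroup _) : Set (Equiv.Perm (Tri n)))
      = triH₂ n := rfl
  have hc₃ : ((presSubgroup (fun t : Tri n => t.val.2.2) : Subgroup _) : Set (Equiv.Perm (Tri n)))
      = triH₃ n := rfl
  intro q₁ h₁ q₂ h₂ q₃ h₃ hmul
  rw [← hc₁, rightQuotient_subgroup, hc₁] at h₁
  rw [← hc₂, rightQuotient_subgroup, hc₂] at h₂
  rw [← hc₃, rightQuotient_subgroup, hc₃] at h₃
  have hq₁ : ∀ t : Tri n, (q₁ t).val.1 = t.val.1 := h₁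
  have hq₂ : ∀ t : Tri n, (q₂ t).val.2.1 = t.val.2.1 := h₂
  have hq₃ : ∀ t : Tri n, (q₃ t).val.2.2 = t.val.2.2 := h₃
  have hq₁inv : ∀ t : Tri n, (q₁⁻¹ t).val.1 = t.val.1 := by
    intro t
    have h := hq₁ (q₁⁻¹ t)
    rw [show q₁ (q₁⁻¹ t) = t from q₁.apply_symm_apply t] at h
    exact h.symm
  have h23 : ∀ t : Tri n, q₂ (q₃ t) = q₁⁻¹ t := by
    intro t
    have hq : q₂ * q₃ = q₁⁻¹ := by
      rw [mul_assoc] at hmul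
      exact eq_inv_of_mul_eq_one_right hmul
    rw [← hq]
    rfl
  have main : ∀ k : ℕ, ∀ x : Tri n, n * (x.val.2.1 + x.val.2.2) + x.val.2.2 = k → q₃ x = x := by
    intro k
    induction k using Nat.strong_induction_on with
    | _ k IH =>
    intro x hk
    have hxs : x.val.1 + x.val.2.1 + x.val.2.2 = n - 1 := x.2
    have hys : (q₃ x).val.1 + (q₃ x).val.2.1 + (q₃ x).val.2.2 = n - 1 := (q₃ x).2
    have hyc : (q₃ x).val.2.2 = x.val.2.2 := hq₃ x
    have hzs : (q₁⁻¹ x).val.1 + (q₁⁻¹ x).val.2.1 + (q₁⁻¹ x).val.2.2 = n - 1 := (q₁⁻¹ x).2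
    have hza : (q₁⁻¹ x).val.1 = x.val.1 := hq₁inv x
    have hzb : (q₁⁻¹ x).val.2.1 = (q₃ x).val.2.1 := by
      rw [← h23 x]
      exact hq₂ (q₃ x)
    rcases lt_trichotomy ((q₃ x).val.2.1) (x.val.2.1) with hlt | heq | hgt
    · exfalso
      have hsum' : (n - 1 - x.val.2.2 - (q₃ x).val.2.1) + (q₃ x).val.2.1 + x.val.2.2 = n - 1 := by
        omega
      set x' : Tri n := ⟨(n - 1 - x.val.2.2 - (q₃ x).val.2.1, (q₃ x).val.2.1, x.val.2.2), hsum'⟩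
        with hx'def
      have hb' : x'.val.2.1 = (q₃ x).val.2.1 := rfl
      have hc' : x'.val.2.2 = x.val.2.2 := rfl
      have hkey : n * (x'.val.2.1 + x'.val.2.2) + x'.val.2.2 < k := by
        rw [hb', hc']
        calc n * ((q₃ x).val.2.1 + x.val.2.2) + x.val.2.2
            < n * (x.val.2.1 + x.val.2.2) + x.val.2.2 :=
              Nat.add_lt_add_right (mul_lt_mul_of_pos_left (by omega) (by omega)) _
          _ = k := hk
      have h3x' := IH _ hkey x' rfl
      have hyx' : q₃ x = x' := tri_ext (by rw [hb']) (by rw [hc', hyc])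
      have hxx' : x = x' := q₃.injective (by rw [hyx', h3x'])
      have hb : x.val.2.1 = x'.val.2.1 := congrArg (fun t : Tri n => t.val.2.1) hxx'
      rw [hb'] at hb
      omega
    · exact tri_ext heq hyc
    · exfalso
      have hab' : x.val.1 + (q₃ x).val.2.1 ≤ n - 1 := by omega
      have hsum' : x.val.1 + (q₃ x).val.2.1 + (n - 1 - x.val.1 - (q₃ x).val.2.1) = n - 1 := by
        omega
      set x' : Tri n := ⟨(x.val.1, (q₃ x).val.2.1, n - 1 - x.val.1 - (q₃ x).val.2.1), hsum'⟩
        with hx'def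
      have ha' : x'.val.1 = x.val.1 := rfl
      have hb' : x'.val.2.1 = (q₃ x).val.2.1 := rfl
      have hc' : x'.val.2.2 = n - 1 - x.val.1 - (q₃ x).val.2.1 := rfl
      have hm'lt : x'.val.2.2 < x.val.2.2 := by rw [hc']; omega
      have hkey : n * (x'.val.2.1 + x'.val.2.2) + x'.val.2.2 < k := by
        rw [hb', hc']
        have hbm : (q₃ x).val.2.1 + (n - 1 - x.val.1 - (q₃ x).val.2.1)
            = x.val.2.1 + x.val.2.2 := by omega
        rw [hbm]
        calc n * (x.val.2.1 + x.val.2.2) + (n - 1 - x.val.1 - (q₃ x).val.2.1)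
            < n * (x.val.2.1 + x.val.2.2) + x.val.2.2 := Nat.add_lt_add_left (by omega) _
          _ = k := hk
      have h3x' := IH _ hkey x' rfl
      have hz'b : (q₁⁻¹ x').val.2.1 = (q₃ x').val.2.1 := by
        rw [← h23 x']
        exact hq₂ (q₃ x')
      rw [h3x'] at hz'b
      have hz'a : (q₁⁻¹ x').val.1 = x'.val.1 := hq₁inv x'
      have hz'x' : q₁⁻¹ x' = x' := by
        refine tri_ext hz'b ?_
        have h := (q₁⁻¹ x').2
        have h' := x'.2
        omega
      have hzx' : q₁⁻¹ x = x' := by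
        refine tri_ext ?_ ?_
        · rw [hzb, hb']
        · rw [hc']
          omega
      have hxx' : x = x' := (q₁⁻¹ : Equiv.Perm (Tri n)).injective (by rw [hzx', hz'x'])
      have hcx : x.val.2.2 = x'.val.2.2 := congrArg (fun t : Tri n => t.val.2.2) hxx'
      omega
  have hq₃1 : q₃ = 1 := Equiv.ext (fun x => main _ x rfl)
  have h12 : q₁ * q₂ = 1 := by
    rw [hq₃1, mul_one] at hmul
    exact hmul
  have hq₂inv : q₂ = q₁⁻¹ := by
    have h := eq_inv_of_mul_eq_one_left h12
    rw [h, inv_inv]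
  have hq₂1 : q₂ = 1 := by
    apply Equiv.ext
    intro t
    refine tri_ext ?_ ?_
    · show (q₂ t).val.2.1 = t.val.2.1
      exact hq₂ t
    · show (q₂ t).val.2.2 = t.val.2.2
      have h1 : (q₂ t).val.1 = t.val.1 := by rw [hq₂inv]; exact hq₁inv t
      have h2 : (q₂ t).val.2.1 = t.val.2.1 := hq₂ t
      have hs1 := (q₂ t).2
      have hs2 := t.2
      omega
  have hq₁1 : q₁ = 1 := by
    rw [hq₂1, mul_one] at h12
    exact h12
  exact ⟨hq₁1, hq₂1, hq₃1⟩

def triF₁ (n : ℕ) (hn : 1 ≤ n) : Tri n → Fin n :=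
  fun t => ⟨t.val.1, by have := t.2; omega⟩
def triF₂ (n : ℕ) (hn : 1 ≤ n) : Tri n → Fin n :=
  fun t => ⟨t.val.2.1, by have := t.2; omega⟩
def triF₃ (n : ℕ) (hn : 1 ≤ n) : Tri n → Fin n :=
  fun t => ⟨t.val.2.2, by have := t.2; omega⟩

def triE₁ (n : ℕ) (hn : 1 ≤ n) (v : Fin n) :
    {t : Tri n // triF₁ n hn t = v} ≃ Fin (n - (v : ℕ)) where
  toFun x := ⟨x.1.val.2.1, by
    have hs := x.1.2
    have hv : x.1.val.1 = (v : ℕ) := congrArg Fin.val x.2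
    omega⟩
  invFun j := ⟨⟨((v : ℕ), (j : ℕ), n - 1 - v - j), by
    have h1 := j.2; have h2 := v.2
    show (v : ℕ) + (j : ℕ) + (n - 1 - v - j) = n - 1
    omega⟩,
    Fin.val_injective rfl⟩
  left_inv x := by
    apply Subtype.ext
    apply Subtype.ext
    have hs := x.1.2
    have hv : x.1.val.1 = (v : ℕ) := congrArg Fin.val x.2
    show ((v : ℕ), x.1.val.2.1, n - 1 - (v : ℕ) - x.1.val.2.1) = x.1.val
    refine Prod.ext ?_ (Prod.ext ?_ ?_)
    · show (v : ℕ) = x.1.val.1; omega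
    · rfl
    · show n - 1 - (v : ℕ) - x.1.val.2.1 = x.1.val.2.2; omega
  right_inv j := Fin.val_injective rfl

def triE₂ (n : ℕ) (hn : 1 ≤ n) (v : Fin n) :
    {t : Tri n // triF₂ n hn t = v} ≃ Fin (n - (v : ℕ)) where
  toFun x := ⟨x.1.val.2.2, by
    have hs := x.1.2
    have hv : x.1.val.2.1 = (v : ℕ) := congrArg Fin.val x.2
    omega⟩
  invFun j := ⟨⟨(n - 1 - v - j, (v : ℕ), (j : ℕ)), by
    have h1 := j.2; have h2 := v.2
    show (n - 1 - (v : ℕ) - (j : ℕ)) + (v : ℕ) + (j : ℕ) = n - 1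
    omega⟩,
    Fin.val_injective rfl⟩
  left_inv x := by
    apply Subtype.ext
    apply Subtype.ext
    have hs := x.1.2
    have hv : x.1.val.2.1 = (v : ℕ) := congrArg Fin.val x.2
    show (n - 1 - (v : ℕ) - x.1.val.2.2, (v : ℕ), x.1.val.2.2) = x.1.val
    refine Prod.ext ?_ (Prod.ext ?_ ?_)
    · show n - 1 - (v : ℕ) - x.1.val.2.2 = x.1.val.1; omega
    · show (v : ℕ) = x.1.val.2.1; omega
    · rfl
  right_inv j := Fin.val_injective rfl

def triE₃ (n : ℕ) (hn : 1 ≤ n) (v : Fin n) :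
    {t : Tri n // triF₃ n hn t = v} ≃ Fin (n - (v : ℕ)) where
  toFun x := ⟨x.1.val.2.1, by
    have hs := x.1.2
    have hv : x.1.val.2.2 = (v : ℕ) := congrArg Fin.val x.2
    omega⟩
  invFun j := ⟨⟨(n - 1 - v - j, (j : ℕ), (v : ℕ)), by
    have h1 := j.2; have h2 := v.2
    show (n - 1 - (v : ℕ) - (j : ℕ)) + (j : ℕ) + (v : ℕ) = n - 1
    omega⟩,
    Fin.val_injective rfl⟩
  left_inv x := by
    apply Subtype.ext
    apply Subtype.ext
    have hs := x.1.2
    have hv : x.1.val.2.2 = (v : ℕ) := congrArg Fin.val x.2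
    show (n - 1 - (v : ℕ) - x.1.val.2.1, x.1.val.2.1, (v : ℕ)) = x.1.val
    refine Prod.ext ?_ (Prod.ext ?_ ?_)
    · show n - 1 - (v : ℕ) - x.1.val.2.1 = x.1.val.1; omega
    · rfl
    · show (v : ℕ) = x.1.val.2.2; omega
  right_inv j := Fin.val_injective rfl

def permHom {α β : Type*} (e : α ≃ β) : Equiv.Perm α →* Equiv.Perm β where
  toFun σ := (e.symm.trans σ).trans e
  map_one' := by ext x; simp
  map_mul' σ τ := by ext x; simp [Equiv.Perm.mul_apply]

lemma permHom_injective {α β : Type*} (e : α ≃ β) : Function.Injective (permHom e) := by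
  intro σ τ h
  apply Equiv.ext
  intro x
  have h1 : (permHom e σ) (e x) = (permHom e τ) (e x) := by rw [h]
  simp only [permHom, Equiv.trans_apply, Equiv.symm_apply_apply,
    MonoidHom.coe_mk, OneHom.coe_mk] at h1
  exact e.injective h1

theorem stmt_5 (n : ℕ) (hn : 1 ≤ n) :
    Nat.card (Tri n) = n * (n + 1) / 2 ∧
    (∃ K₁ K₂ K₃ : Subgroup (Equiv.Perm (Tri n)),
      (K₁ : Set (Equiv.Perm (Tri n))) = triH₁ n ∧
      (K₂ : Set (Equiv.Perm (Tri n))) = triH₂ n ∧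
      (K₃ : Set (Equiv.Perm (Tri n))) = triH₃ n) ∧
    TPP (triH₁ n) (triH₂ n) (triH₃ n) ∧
    (triH₁ n).ncard = ∏ k ∈ Finset.Icc 1 n, (Nat.factorial k) ∧
    (triH₂ n).ncard = ∏ k ∈ Finset.Icc 1 n, (Nat.factorial k) ∧
    (triH₃ n).ncard = ∏ k ∈ Finset.Icc 1 n, (Nat.factorial k) ∧
    Realizes (Equiv.Perm (Fin (n * (n + 1) / 2)))
      (∏ k ∈ Finset.Icc 1 n, (Nat.factorial k)) (∏ k ∈ Finset.Icc 1 n, (Nat.factorial k)) (∏ k ∈ Finset.Icc 1 n, (Nat.factorial k)) := by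
  have eTri : Tri n ≃ Σ v : Fin n, Fin (n - (v : ℕ)) :=
    (Equiv.sigmaFiberEquiv (triF₁ n hn)).symm.trans (Equiv.sigmaCongrRight (triE₁ n hn))
  have hsum : ∑ v : Fin n, (n - (v : ℕ)) = n * (n + 1) / 2 := by
    rw [Fin.sum_univ_eq_sum_range (fun v => n - v) n]
    have h2 : ∑ i ∈ Finset.range n, (n - i) = ∑ i ∈ Finset.range n, (i + 1) := by
      rw [← Finset.sum_range_reflect (fun j => j + 1) n]
      refine Finset.sum_congr rfl ?_
      intro i hi
      rw [Finset.mem_range] at hi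
      omega
    have h3 : ∑ i ∈ Finset.range (n + 1), i = ∑ i ∈ Finset.range n, (i + 1) := by
      rw [Finset.sum_range_succ' (fun i => i) n]
      simp
    have h4 : (∑ i ∈ Finset.range (n + 1), i) * 2 = (n + 1) * n := by
      simpa using Finset.sum_range_id_mul_two (n + 1)
    rw [h2, ← h3]
    have h5 : n * (n + 1) = (∑ i ∈ Finset.range (n + 1), i) * 2 := by rw [h4]; ring
    exact (Nat.div_eq_of_eq_mul_left (by norm_num) h5).symm
  have hcardTri : Nat.card (Tri n) = n * (n + 1) / 2 := by
    rw [Nat.card_congr eTri, Nat.card_eq_fintype_card, Fintype.card_sigma]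
    simpa using hsum
  haveI : Fintype (Tri n) := Fintype.ofEquiv _ eTri.symm
  have hset₁ : {π : Equiv.Perm (Tri n) | ∀ t, triF₁ n hn (π t) = triF₁ n hn t} = triH₁ n := by
    ext π
    constructor
    · intro h t; exact congrArg Fin.val (h t)
    · intro h t; exact Fin.val_injective (h t)
  have hset₂ : {π : Equiv.Perm (Tri n) | ∀ t, triF₂ n hn (π t) = triF₂ n hn t} = triH₂ n := by
    ext π
    constructor
    · intro h t; exact congrArg Fin.val (h t)
    · intro h t; exact Fin.val_injective (h t)
  have hset₃ : {π : Equiv.Perm (Tri n) | ∀ t, triF₃ n hn (π t) = triF₃ n hn t} = triH₃ n := by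
    ext π
    constructor
    · intro h t; exact congrArg Fin.val (h t)
    · intro h t; exact Fin.val_injective (h t)
  have hcard₁ : (triH₁ n).ncard = ∏ k ∈ Finset.Icc 1 n, Nat.factorial k := by
    rw [← hset₁, ← Nat.card_coe_set_eq]
    exact natCard_pres_fin (triF₁ n hn) (triE₁ n hn)
  have hcard₂ : (triH₂ n).ncard = ∏ k ∈ Finset.Icc 1 n, Nat.factorial k := by
    rw [← hset₂, ← Nat.card_coe_set_eq]
    exact natCard_pres_fin (triF₂ n hn) (triE₂ n hn)
  have hcard₃ : (triH₃ n).ncard = ∏ k ∈ Finset.Icc 1 n, Nat.factorial k := by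
    rw [← hset₃, ← Nat.card_coe_set_eq]
    exact natCard_pres_fin (triF₃ n hn) (triE₃ n hn)
  refine ⟨hcardTri,
    ⟨presSubgroup (fun t : Tri n => t.val.1), presSubgroup (fun t : Tri n => t.val.2.1),
      presSubgroup (fun t : Tri n => t.val.2.2), rfl, rfl, rfl⟩,
    tri_tpp n hn, hcard₁, hcard₂, hcard₃, ?_⟩
  have hcardF : Fintype.card (Tri n) = n * (n + 1) / 2 := by
    rw [← Nat.card_eq_fintype_card]
    exact hcardTri
  let eFin : Tri n ≃ Fin (n * (n + 1) / 2) := Fintype.equivFinOfCardEq hcardF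
  have hinj := permHom_injective eFin
  haveI : Finite (Equiv.Perm (Tri n)) :=
    Finite.of_injective (fun σ : Equiv.Perm (Tri n) => (σ : Tri n → Tri n))
      (fun a b h => Equiv.coe_fn_injective h)
  refine ⟨permHom eFin '' triH₁ n, permHom eFin '' triH₂ n, permHom eFin '' triH₃ n,
    Set.Finite.image _ (Set.toFinite _), Set.Finite.image _ (Set.toFinite _),
    Set.Finite.image _ (Set.toFinite _), ?_, ?_, ?_, tpp_image _ hinj (tri_tpp n hn)⟩
  · rw [Set.ncard_image_of_injective _ hinj]; exact hcard₁
  · rw [Set.ncard_image_of_injective _ hinj]; exact hcard₂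
  · rw [Set.ncard_image_of_injective _ hinj]; exact hcard₃
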